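/- arXiv:1811.04300 — 5 statements merged into one kernel-verified Lean document; each statement's English description precedes it below -/
import Mathlib

section
/- Let A be a live subproblem with u-chunk a and v-chunk b with respect to a clean edit-matching alignment T, meaning: |b| < 8|a| + 12, |a| < 2|b|, |a| > 0, and fewer than |a|/10 elements of a are unmatched by T to elements of b. Then at least 4/5 of the pivot options of A (the letters u_i of a with ⌈|a|/4⌉ ≤ i ≤ ⌈3|a|/4⌉, which comprise at least half of a) are valid pivots, i.e., each edit matches (under the comparison function f) with exactly one letter of b. -/
/-- **Lemma (valid pivots in live subproblems).**
Let `f` be a comparison function on positions, `T` a clean edit-matching alignment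
(non-crossing matching using only pairs with `f = true`, where each matched letter is
the unique one edit matching its partner).  Consider a subproblem with `u`-chunk the
positions `[a1, a2)` and `v`-chunk the positions `[b1, b2)`, and suppose it is live:
`|b| < 8|a| + 12`, `|a| < 2|b|`, `|a| > 0`, and fewer than `|a|/10` positions of the
`u`-chunk are unmatched by `T` to positions of the `v`-chunk.  The pivot options are the
positions `i` of the `u`-chunk whose (1-indexed) relative position `r` satisfies
`⌈|a|/4⌉ ≤ r ≤ ⌈3|a|/4⌉`; they comprise at least half of the chunk, and at least
`4/5` of them are valid pivots, i.e. edit match with exactly one position of the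
`v`-chunk. -/
theorem live_subproblem_valid_pivots
    (f : ℕ → ℕ → Bool) (T : Finset (ℕ × ℕ))
    (hedge : ∀ p ∈ T, f p.1 p.2 = true)
    (hmatch : ∀ p ∈ T, ∀ q ∈ T, p ≠ q → p.1 ≠ q.1 ∧ p.2 ≠ q.2)
    (hcross : ∀ p ∈ T, ∀ q ∈ T, p.1 < q.1 → p.2 < q.2)
    (hclean : ∀ p ∈ T, (∀ i', f i' p.2 = true → i' = p.1) ∧
      (∀ j', f p.1 j' = true → j' = p.2))
    (a1 a2 b1 b2 : ℕ)
    (m : ℕ) (hm : m = a2 - a1) (hmpos : 0 < m)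
    (hlive1 : b2 - b1 < 8 * m + 12)
    (hlive2 : m < 2 * (b2 - b1))
    (hlive3 : 10 * ((Finset.Ico a1 a2).filter fun i =>
        ¬ ∃ j ∈ Finset.Ico b1 b2, (i, j) ∈ T).card < m) :
    2 * ((Finset.Ico a1 a2).filter fun i =>
          (m + 3) / 4 ≤ i - a1 + 1 ∧ i - a1 + 1 ≤ (3 * m + 3) / 4).card ≥ m ∧
    (4 : ℝ) / 5 * ((Finset.Ico a1 a2).filter fun i =>
          (m + 3) / 4 ≤ i - a1 + 1 ∧ i - a1 + 1 ≤ (3 * m + 3) / 4).card ≤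
      (((Finset.Ico a1 a2).filter fun i =>
          ((m + 3) / 4 ≤ i - a1 + 1 ∧ i - a1 + 1 ≤ (3 * m + 3) / 4) ∧
          ((Finset.Ico b1 b2).filter fun j => f i j = true).card = 1).card : ℝ) := by
  set P := (Finset.Ico a1 a2).filter fun i =>
      (m + 3) / 4 ≤ i - a1 + 1 ∧ i - a1 + 1 ≤ (3 * m + 3) / 4 with hP
  set U := (Finset.Ico a1 a2).filter fun i =>
      ¬ ∃ j ∈ Finset.Ico b1 b2, (i, j) ∈ T with hU
  set V := (Finset.Ico a1 a2).filter fun i =>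
      ((m + 3) / 4 ≤ i - a1 + 1 ∧ i - a1 + 1 ≤ (3 * m + 3) / 4) ∧
      ((Finset.Ico b1 b2).filter fun j => f i j = true).card = 1 with hV
  have hsub : Finset.Icc (a1 + (m + 3) / 4 - 1) (a1 + (3 * m + 3) / 4 - 1) ⊆ P := by
    intro i hi
    simp only [Finset.mem_Icc] at hi
    simp only [hP, Finset.mem_filter, Finset.mem_Ico]
    omega
  have hPcard : 2 * P.card ≥ m := by
    have := Finset.card_le_card hsub
    rw [Nat.card_Icc] at this
    omega
  have hPVU : P ⊆ V ∪ U := by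
    intro i hi
    simp only [hP, Finset.mem_filter, Finset.mem_Ico] at hi
    by_cases hex : ∃ j ∈ Finset.Ico b1 b2, (i, j) ∈ T
    · obtain ⟨j, hj, hijT⟩ := hex
      have hcard : ((Finset.Ico b1 b2).filter fun j' => f i j' = true) = {j} := by
        ext j'
        simp only [Finset.mem_filter, Finset.mem_singleton]
        constructor
        · rintro ⟨_, hf⟩
          exact (hclean _ hijT).2 j' hf
        · rintro rfl
          exact ⟨hj, hedge _ hijT⟩
      refine Finset.mem_union_left _ ?_
      simp only [hV, Finset.mem_filter, Finset.mem_Ico]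
      exact ⟨hi.1, hi.2, by rw [hcard]; simp⟩
    · refine Finset.mem_union_right _ ?_
      simp only [hU, Finset.mem_filter, Finset.mem_Ico]
      exact ⟨hi.1, by simpa using hex⟩
  have hcards : P.card ≤ V.card + U.card :=
    le_trans (Finset.card_le_card hPVU) (Finset.card_union_le _ _)
  refine ⟨hPcard, ?_⟩
  have hkey : 4 * P.card ≤ 5 * V.card := by omega
  rw [div_mul_eq_mul_div, div_le_iff₀ (by norm_num : (0:ℝ) < 5)]
  exact_mod_cast Nat.le_trans hkey (by omega)
end

section
/- Let T be a non-crossing matching between positions of u and v with position map φ. Suppose a subproblem splits at pivot position i in u matched to position j in v, producing child subproblems on (u_1…u_{i−1}, v_1…v_{j−1}) and (u_{i+1}…u_{|u|}, v_{j+1}…v_{|v|}). Then the number of edges of T that lie in the parent subproblem but in neither child — i.e., edges (u_r, v_s) with r ≠ i that are cut — is at most |φ(i) − j| + 1. (Every cut edge (u_r, v_s) has s between min(j, φ(i)) and max(j, φ(i)) inclusive.) -/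
open scoped Classical

/-- The position map of a matching `T` between (1-indexed) positions:
`phi T l = k` if `(l, k) ∈ T`, otherwise `phi T l = phi T (l-1)`, with
`phi T l = 1` when no earlier matched position exists. -/
noncomputable def phi (T : Finset (ℕ × ℕ)) : ℕ → ℕ
  | 0 => 1
  | l + 1 => if h : ∃ k, (l + 1, k) ∈ T then h.choose else phi T l

/-- **Cut edges at a pivot split.**  If a subproblem splits at pivot position `i` of `u`
matched to position `j` of `v`, then every edge `(r, s) ∈ T` with `r ≠ i` that is cut
(contained in neither region `{r < i, s < j}` nor `{r > i, s > j}`) has `s` between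
`min(j, φ(i))` and `max(j, φ(i))` inclusive, and the number of such cut edges is at
most `|φ(i) − j| + 1`. -/
theorem cut_edges_bound (T : Finset (ℕ × ℕ))
    (hpos : ∀ p ∈ T, 1 ≤ p.1 ∧ 1 ≤ p.2)
    (hmatch : ∀ p ∈ T, ∀ q ∈ T, p ≠ q → p.1 ≠ q.1 ∧ p.2 ≠ q.2)
    (hcross : ∀ p ∈ T, ∀ q ∈ T, p.1 < q.1 → p.2 < q.2)
    (i j : ℕ) (hi : 1 ≤ i) (hj : 1 ≤ j) :
    (∀ e ∈ T.filter fun e : ℕ × ℕ =>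
        e.1 ≠ i ∧ ¬(e.1 < i ∧ e.2 < j) ∧ ¬(i < e.1 ∧ j < e.2),
      min j (phi T i) ≤ e.2 ∧ e.2 ≤ max j (phi T i)) ∧
    (T.filter fun e : ℕ × ℕ =>
        e.1 ≠ i ∧ ¬(e.1 < i ∧ e.2 < j) ∧ ¬(i < e.1 ∧ j < e.2)).card ≤
      ((phi T i : ℤ) - (j : ℤ)).natAbs + 1 := by
  have claimA : ∀ l r s, (r, s) ∈ T → r ≤ l → s ≤ phi T l := by
    intro l
    induction l with
    | zero =>
      intro r s hrs hr
      have := hpos _ hrs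
      omega
    | succ n ih =>
      intro r s hrs hr
      by_cases h : ∃ k, (n + 1, k) ∈ T
      · have hphi : phi T (n + 1) = h.choose := by rw [phi]; simp [h]
        rw [hphi]
        rcases lt_or_eq_of_le hr with h1 | h1
        · exact le_of_lt (hcross _ hrs _ h.choose_spec (by omega))
        · by_contra hne
          have hne' : (r, s) ≠ (n + 1, h.choose) := by
            intro hq
            rw [Prod.mk.injEq] at hq
            omega
          have := (hmatch _ hrs _ h.choose_spec hne').1
          simp at this
          omega
      · have hphi : phi T (n + 1) = phi T n := by rw [phi]; simp [h]
        rw [hphi]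
        have hr' : r ≤ n := by
          rcases Nat.eq_or_lt_of_le hr with h1 | h1
          · exact absurd ⟨s, h1 ▸ hrs⟩ h
          · omega
        exact ih r s hrs hr'
  have claimB : ∀ l r s, (r, s) ∈ T → l < r → phi T l ≤ s := by
    intro l
    induction l with
    | zero =>
      intro r s hrs _
      show 1 ≤ s
      exact (hpos _ hrs).2
    | succ n ih =>
      intro r s hrs hr
      by_cases h : ∃ k, (n + 1, k) ∈ T
      · have hphi : phi T (n + 1) = h.choose := by rw [phi]; simp [h]
        rw [hphi]
        exact le_of_lt (hcross _ h.choose_spec _ hrs hr)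
      · have hphi : phi T (n + 1) = phi T n := by rw [phi]; simp [h]
        rw [hphi]
        exact ih r s hrs (by omega)
  have key : ∀ e ∈ T.filter fun e : ℕ × ℕ =>
        e.1 ≠ i ∧ ¬(e.1 < i ∧ e.2 < j) ∧ ¬(i < e.1 ∧ j < e.2),
      min j (phi T i) ≤ e.2 ∧ e.2 ≤ max j (phi T i) := by
    intro e he
    rw [Finset.mem_filter] at he
    obtain ⟨heT, hne, hc1, hc2⟩ := he
    rcases Nat.lt_or_ge e.1 i with h1 | h1
    · have hs1 : j ≤ e.2 := by omega
      have hs2 : e.2 ≤ phi T i := claimA i e.1 e.2 heT (by omega)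
      constructor
      · exact le_trans (min_le_left _ _) hs1
      · exact le_trans hs2 (le_max_right _ _)
    · have h1' : i < e.1 := by omega
      have hs1 : e.2 ≤ j := by omega
      have hs2 : phi T i ≤ e.2 := claimB i e.1 e.2 heT h1'
      constructor
      · exact le_trans (min_le_right _ _) hs2
      · exact le_trans hs1 (le_max_left _ _)
  refine ⟨key, ?_⟩
  have hcard : (T.filter fun e : ℕ × ℕ =>
        e.1 ≠ i ∧ ¬(e.1 < i ∧ e.2 < j) ∧ ¬(i < e.1 ∧ j < e.2)).card ≤
      (Finset.Icc (min j (phi T i)) (max j (phi T i))).card := by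
    apply Finset.card_le_card_of_injOn (fun e => e.2)
    · intro e he
      rw [Finset.mem_coe, Finset.mem_Icc]
      exact key e he
    · intro a ha b hb hab
      rw [Finset.mem_coe, Finset.mem_filter] at ha hb
      by_contra hne
      exact (hmatch _ ha.1 _ hb.1 hne).2 hab
  rw [Nat.card_Icc] at hcard
  exact hcard.trans (by omega)
end

section
/- Consider strings a and b and a comparison function f, with cost of an edit-matching alignment A defined as (number of letters of a unmatched by A) plus (number of indices i such that b_i, b_{i+1}, …, b_{i+6} are all unmatched by A). If |b| ≥ 8|a| + 12, then every edit-matching alignment between a and b has cost at least |a|. (In particular, the number of matched edges is at most |a|, each edge blocks at most 7 of the length-7 windows of b, and b has at least 8|a| windows, so at least |a| windows are edge-free.) -/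
/-- The `a`-portion cost of an alignment `A` between strings of lengths `la` and `lb`
(positions 0-indexed): the number of positions of `a` unmatched by `A`. -/
def aCost (la : ℕ) (A : Finset (ℕ × ℕ)) : ℕ :=
  ((Finset.range la).filter fun i => ∀ p ∈ A, p.1 ≠ i).card

/-- The `b`-portion cost: the number of length-7 windows of `b` (sets of 7 consecutive
positions) all of whose positions are unmatched by `A`. -/
def bCost (lb : ℕ) (A : Finset (ℕ × ℕ)) : ℕ :=
  ((Finset.range (lb - 6)).filter fun i => ∀ t ∈ Finset.range 7, ∀ p ∈ A, p.2 ≠ i + t).card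

/-- If `|b| ≥ 8|a| + 12`, then every edit-matching alignment between `a` and `b`
has cost at least `|a|`. -/
theorem long_b_cost_lower_bound (la lb : ℕ) (f : ℕ → ℕ → Bool) (A : Finset (ℕ × ℕ))
    (hvalid : ∀ p ∈ A, p.1 < la ∧ p.2 < lb ∧ f p.1 p.2 = true)
    (hmatch : ∀ p ∈ A, ∀ q ∈ A, p ≠ q → p.1 ≠ q.1 ∧ p.2 ≠ q.2)
    (hcross : ∀ p ∈ A, ∀ q ∈ A, p.1 < q.1 → p.2 < q.2)
    (h : 8 * la + 12 ≤ lb) :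
    la ≤ aCost la A + bCost lb A := by
  classical
  -- |A| ≤ la since first coordinates are distinct and < la
  have hA : A.card ≤ la := by
    have hinj : Set.InjOn (fun p : ℕ × ℕ => p.1) A := by
      intro p hp q hq hpq
      by_contra hne
      exact (hmatch p hp q hq hne).1 hpq
    have himg : A.image (fun p : ℕ × ℕ => p.1) ⊆ Finset.range la := by
      intro x hx
      obtain ⟨p, hp, rfl⟩ := Finset.mem_image.1 hx
      exact Finset.mem_range.2 (hvalid p hp).1
    calc A.card = (A.image (fun p : ℕ × ℕ => p.1)).card :=
          (Finset.card_image_of_injOn hinj).symm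
      _ ≤ (Finset.range la).card := Finset.card_le_card himg
      _ = la := Finset.card_range la
  set S := Finset.range (lb - 6) with hS
  set P : ℕ → Prop := fun i => ∀ t ∈ Finset.range 7, ∀ p ∈ A, p.2 ≠ i + t with hP
  have hsub : S.filter (fun i => ¬ P i) ⊆ A.biUnion (fun p => Finset.Icc (p.2 - 6) p.2) := by
    intro i hi
    simp only [Finset.mem_filter, hP] at hi
    obtain ⟨hiS, hnp⟩ := hi
    push_neg at hnp
    obtain ⟨t, ht, p, hp, hpt⟩ := hnp
    refine Finset.mem_biUnion.2 ⟨p, hp, ?_⟩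
    have ht6 : t ≤ 6 := by
      have := Finset.mem_range.1 ht; omega
    simp only [Finset.mem_Icc]
    omega
  have hbad : (S.filter (fun i => ¬ P i)).card ≤ 7 * A.card := by
    calc (S.filter (fun i => ¬ P i)).card
        ≤ (A.biUnion (fun p => Finset.Icc (p.2 - 6) p.2)).card := Finset.card_le_card hsub
      _ ≤ ∑ p ∈ A, (Finset.Icc (p.2 - 6) p.2).card := Finset.card_biUnion_le
      _ ≤ ∑ p ∈ A, 7 := by
          apply Finset.sum_le_sum
          intro p _
          rw [Nat.card_Icc]
          omega
      _ = 7 * A.card := by rw [Finset.sum_const]; ring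
  have hsplit : (S.filter P).card + (S.filter (fun i => ¬ P i)).card = S.card :=
    Finset.card_filter_add_card_filter_not (p := P)
  have hScard : S.card = lb - 6 := Finset.card_range _
  have hb : la ≤ bCost lb A := by
    have : bCost lb A = (S.filter P).card := rfl
    omega
  omega
end

section
/- Suppose a subproblem has u-chunk a and v-chunk b where at least |a|/10 of the positions of a are not matched by T to positions of b, or |a| ≥ 2|b|, or |b| ≥ 8|a| + 12 (i.e., the subproblem is dead). Then the induced cost of the subproblem (the cost of T restricted to a and b) is at least |a|/10 whenever |a| > 0, except in the case |a| = 0 where the surplus cost is 0. Consequently, the surplus cost (the number of edges of T between a and b absent from the algorithm's output) is at most 10 times the induced cost. -/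
/-- **Dead subproblems.**  Consider a subproblem with `u`-chunk of length `la` and
`v`-chunk of length `lb`, and the set `E` of edges of the clean edit-matching
alignment `T` between the two chunks.  If the subproblem is dead — at least `la/10`
positions of the `u`-chunk are unmatched, or `la ≥ 2 lb`, or `lb ≥ 8 la + 12` — then
the induced cost `aCost + bCost` is at least `la/10` whenever `la > 0`; when `la = 0`
the surplus cost is `0`; and in all cases the surplus cost (edges of `E` missing from
the algorithm's output `Pi`) is at most `10` times the induced cost. -/
theorem dead_subproblem_surplus (la lb : ℕ) (E Pi : Finset (ℕ × ℕ))
    (hvalid : ∀ p ∈ E, p.1 < la ∧ p.2 < lb)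
    (hmatch : ∀ p ∈ E, ∀ q ∈ E, p ≠ q → p.1 ≠ q.1 ∧ p.2 ≠ q.2)
    (hcross : ∀ p ∈ E, ∀ q ∈ E, p.1 < q.1 → p.2 < q.2)
    (hdead : la ≤ 10 * aCost la E ∨ 2 * lb ≤ la ∨ 8 * la + 12 ≤ lb) :
    (0 < la → la ≤ 10 * (aCost la E + bCost lb E)) ∧
    (la = 0 → (E \ Pi).card = 0) ∧
    (E \ Pi).card ≤ 10 * (aCost la E + bCost lb E) := by
  classical
  have hinj1 : Set.InjOn Prod.fst (E : Set (ℕ × ℕ)) := by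
    intro p hp q hq h
    by_contra hne
    exact (hmatch p hp q hq hne).1 h
  have hE_la : E.card ≤ la := by
    have := Finset.card_le_card_of_injOn Prod.fst
      (fun p hp => Finset.mem_range.mpr (hvalid p hp).1) hinj1
    simpa using this
  have ha : la ≤ aCost la E + E.card := by
    have hsplit : aCost la E +
        ((Finset.range la).filter fun i => ¬ ∀ p ∈ E, p.1 ≠ i).card = la := by
      simpa [aCost] using Finset.card_filter_add_card_filter_not
        (s := Finset.range la) (p := fun i => ∀ p ∈ E, p.1 ≠ i)
    have hsub : ((Finset.range la).filter fun i => ¬ ∀ p ∈ E, p.1 ≠ i)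
        ⊆ E.image Prod.fst := by
      intro i hi
      simp only [Finset.mem_filter] at hi
      push_neg at hi
      obtain ⟨p, hp, hpi⟩ := hi.2
      exact Finset.mem_image.mpr ⟨p, hp, hpi⟩
    have := (Finset.card_le_card hsub).trans Finset.card_image_le
    omega
  have hb : lb - 6 ≤ bCost lb E + 7 * E.card := by
    have hsplit : bCost lb E +
        ((Finset.range (lb - 6)).filter fun i =>
          ¬ ∀ t ∈ Finset.range 7, ∀ p ∈ E, p.2 ≠ i + t).card = lb - 6 := by
      simpa [bCost] using Finset.card_filter_add_card_filter_not
        (s := Finset.range (lb - 6))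
        (p := fun i => ∀ t ∈ Finset.range 7, ∀ p ∈ E, p.2 ≠ i + t)
    have hsub : ((Finset.range (lb - 6)).filter fun i =>
          ¬ ∀ t ∈ Finset.range 7, ∀ p ∈ E, p.2 ≠ i + t)
        ⊆ E.biUnion (fun p => (Finset.range 7).image (fun t => p.2 - t)) := by
      intro i hi
      simp only [Finset.mem_filter] at hi
      push_neg at hi
      obtain ⟨t, ht, p, hp, hpt⟩ := hi.2
      exact Finset.mem_biUnion.mpr ⟨p, hp, Finset.mem_image.mpr ⟨t, ht, by omega⟩⟩
    have h1 := Finset.card_le_card hsub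
    have h2 : (E.biUnion (fun p => (Finset.range 7).image (fun t => p.2 - t))).card
        ≤ 7 * E.card := by
      calc (E.biUnion (fun p => (Finset.range 7).image (fun t => p.2 - t))).card
          ≤ ∑ p ∈ E, ((Finset.range 7).image (fun t => p.2 - t)).card :=
            Finset.card_biUnion_le
        _ ≤ ∑ _p ∈ E, 7 :=
            Finset.sum_le_sum (fun p _ => (Finset.card_image_le).trans (by simp))
        _ = 7 * E.card := by simp [Finset.sum_const, Nat.mul_comm]
    omega
  have hmain : 0 < la → la ≤ 10 * (aCost la E + bCost lb E) := by
    intro hla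
    rcases hdead with h | h | h
    · omega
    · have hinj2 : Set.InjOn Prod.snd (E : Set (ℕ × ℕ)) := by
        intro p hp q hq h
        by_contra hne
        exact (hmatch p hp q hq hne).2 h
      have hE_lb : E.card ≤ lb := by
        have := Finset.card_le_card_of_injOn Prod.snd
          (fun p hp => Finset.mem_range.mpr (hvalid p hp).2) hinj2
        simpa using this
      omega
    · omega
  refine ⟨hmain, ?_, ?_⟩
  · intro h0
    have hE : E = ∅ := by
      apply Finset.eq_empty_iff_forall_notMem.mpr
      intro p hp
      have := (hvalid p hp).1
      omega
    simp [hE]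
  · by_cases h0 : la = 0
    · have hE : E = ∅ := by
        apply Finset.eq_empty_iff_forall_notMem.mpr
        intro p hp
        have := (hvalid p hp).1
        omega
      simp [hE]
    · have h1 : (E \ Pi).card ≤ E.card := Finset.card_le_card (Finset.sdiff_subset)
      have h2 := hmain (Nat.pos_of_ne_zero h0)
      omega
end

section
/- Let x ∈ Σ^n with n a multiple of 6B, broken into blocks x^1, …, x^{n/6B} of length 6B, and let y ∈ Σ^n be broken into blocks y^1, …, y^{n/3B} of length 3B. Suppose blocks x^i and x^j (i ≠ j) both partially edit match with the same block y^k: i.e., there exist 6B-letter substrings u, v of y, each containing y^k, with ed(x^i, u) ≤ pB/8 and ed(x^j, v) ≤ pB/8. Then neither x^i nor x^j is p-unique: each contains a B-letter substring that is within pB/2 edits of some B-letter substring of x disjoint from it. -/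
/-- Costs for Levenshtein distance (Mathlib's former `Levenshtein.Cost`, removed since). -/
structure Levenshtein.Cost (α β δ : Type*) where
  delete : α → δ
  insert : β → δ
  substitute : α → β → δ

/-- Mathlib's former `Levenshtein.defaultCost`. -/
def Levenshtein.defaultCost {α : Type*} [DecidableEq α] : Levenshtein.Cost α α ℕ where
  delete _ := 1
  insert _ := 1
  substitute a b := if a = b then 0 else 1

/-- Mathlib's former `levenshtein`, given by its characterizing recursion. -/
def levenshtein {α β δ : Type*} [AddZeroClass δ] [Min δ] (C : Levenshtein.Cost α β δ) :
    List α → List β → δ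
  | [], [] => 0
  | [], y :: ys => C.insert y + levenshtein C [] ys
  | x :: xs, [] => C.delete x + levenshtein C xs []
  | x :: xs, y :: ys => min (C.delete x + levenshtein C xs (y :: ys))
      (min (C.insert y + levenshtein C (x :: xs) ys) (C.substitute x y + levenshtein C xs ys))

/-- The edit distance between two strings. -/
def ed {α : Type*} [DecidableEq α] (u v : List α) : ℕ :=
  levenshtein Levenshtein.defaultCost u v

/-- The contiguous substring of `x` of length `B` starting at (0-indexed) position `s`. -/
def sub {α : Type*} (x : List α) (B s : ℕ) : List α := (x.drop s).take B

section LevAux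
variable {α β δ : Type*} [AddZeroClass δ] [Min δ] (C : Levenshtein.Cost α β δ)
theorem levenshtein_nil_nil {C : Levenshtein.Cost α β δ} : levenshtein C [] [] = 0 := by simp [levenshtein]
theorem levenshtein_nil_cons (y : β) (ys : List β) :
    levenshtein C [] (y :: ys) = C.insert y + levenshtein C [] ys := by simp [levenshtein]
theorem levenshtein_cons_nil (x : α) (xs : List α) :
    levenshtein C (x :: xs) [] = C.delete x + levenshtein C xs [] := by simp [levenshtein]
theorem levenshtein_cons_cons (x : α) (xs : List α) (y : β) (ys : List β) :
    levenshtein C (x :: xs) (y :: ys) = min (C.delete x + levenshtein C xs (y :: ys))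
      (min (C.insert y + levenshtein C (x :: xs) ys) (C.substitute x y + levenshtein C xs ys)) := by
  simp [levenshtein]
end LevAux

@[simp] theorem Levenshtein.defaultCost_delete {α : Type*} [DecidableEq α] (a : α) :
    (Levenshtein.defaultCost : Levenshtein.Cost α α ℕ).delete a = 1 := rfl
@[simp] theorem Levenshtein.defaultCost_insert {α : Type*} [DecidableEq α] (a : α) :
    (Levenshtein.defaultCost : Levenshtein.Cost α α ℕ).insert a = 1 := rfl
@[simp] theorem Levenshtein.defaultCost_substitute {α : Type*} [DecidableEq α] (a b : α) :
    (Levenshtein.defaultCost : Levenshtein.Cost α α ℕ).substitute a b = if a = b then 0 else 1 := rfl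

namespace EdAux
variable {α : Type*} [DecidableEq α]

theorem ed_nil_nil : ed ([] : List α) [] = 0 := levenshtein_nil_nil
theorem ed_nil_cons (y : α) (ys) : ed [] (y :: ys) = 1 + ed [] ys := by
  simp [ed, levenshtein_nil_cons]
theorem ed_cons_nil (x : α) (xs) : ed (x :: xs) [] = 1 + ed xs [] := by
  simp [ed, levenshtein_cons_nil]
theorem ed_cons_cons (x : α) (xs y ys) :
    ed (x :: xs) (y :: ys) =
      min (1 + ed xs (y :: ys))
        (min (1 + ed (x :: xs) ys) ((if x = y then 0 else 1) + ed xs ys)) := by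
  simp [ed, levenshtein_cons_cons]

/-- Alignments with their cost. -/
inductive Al : List α → List α → ℕ → Prop
  | nil : Al [] [] 0
  | ins (y : α) {a b k} : Al a b k → Al a (y :: b) (k + 1)
  | del (x : α) {a b k} : Al a b k → Al (x :: a) b (k + 1)
  | subst (x y : α) {a b k} : Al a b k → Al (x :: a) (y :: b) (k + if x = y then 0 else 1)

theorem ed_le_ins (a : List α) (y ys) : ed a (y :: ys) ≤ 1 + ed a ys := by
  cases a with
  | nil => rw [ed_nil_cons]
  | cons x xs => rw [ed_cons_cons]; omega
theorem ed_le_del (x : α) (xs b) : ed (x :: xs) b ≤ 1 + ed xs b := by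
  cases b with
  | nil => rw [ed_cons_nil]
  | cons y ys => rw [ed_cons_cons]; omega
theorem ed_le_subst (x : α) (xs y ys) :
    ed (x :: xs) (y :: ys) ≤ (if x = y then 0 else 1) + ed xs ys := by
  rw [ed_cons_cons]; omega

theorem al_sound {a b : List α} {k : ℕ} (h : Al a b k) : ed a b ≤ k := by
  induction h with
  | nil => rw [ed_nil_nil]
  | ins y h ih => exact le_trans (ed_le_ins _ y _) (by omega)
  | del x h ih => exact le_trans (ed_le_del x _ _) (by omega)
  | subst x y h ih =>
      refine le_trans (ed_le_subst x _ y _) ?_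
      have : (if x = y then 0 else 1) ≤ 1 := by split <;> omega
      omega

theorem al_complete (a b : List α) : Al a b (ed a b) := by
  induction a generalizing b with
  | nil =>
    induction b with
    | nil => rw [ed_nil_nil]; exact Al.nil
    | cons y ys ih => rw [ed_nil_cons, Nat.add_comm]; exact Al.ins y ih
  | cons x xs iha =>
    induction b with
    | nil => rw [ed_cons_nil, Nat.add_comm]; exact Al.del x (iha [])
    | cons y ys ihb =>
      have h := ed_cons_cons x xs y ys
      have hc : (if x = y then 0 else 1) ≤ 1 := by split <;> omega
      have : ed (x :: xs) (y :: ys) = 1 + ed xs (y :: ys) ∨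
          ed (x :: xs) (y :: ys) = 1 + ed (x :: xs) ys ∨
          ed (x :: xs) (y :: ys) = (if x = y then 0 else 1) + ed xs ys := by omega
      rcases this with h' | h' | h'
      · rw [h', Nat.add_comm]; exact Al.del x (iha (y :: ys))
      · rw [h', Nat.add_comm]; exact Al.ins y ihb
      · rw [h', Nat.add_comm]; exact Al.subst x y (iha ys)

end EdAux

namespace EdAux
variable {α : Type*} [DecidableEq α]

theorem al_symm {a b : List α} {k : ℕ} (h : Al a b k) : Al b a k := by
  induction h with
  | nil => exact Al.nil
  | ins y h ih => exact Al.del y ih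
  | del x h ih => exact Al.ins x ih
  | subst x y h ih =>
      have : (if x = y then 0 else 1) = if y = x then 0 else 1 := by
        simp [eq_comm]
      rw [this]; exact Al.subst y x ih

theorem ed_symm (a b : List α) : ed a b = ed b a :=
  le_antisymm (al_sound (al_symm (al_complete b a))) (al_sound (al_symm (al_complete a b)))

theorem al_length {a b : List α} {k : ℕ} (h : Al a b k) :
    b.length ≤ a.length + k ∧ a.length ≤ b.length + k := by
  induction h with
  | nil => simp
  | ins y h ih => simp only [List.length_cons]; omega
  | del x h ih => simp only [List.length_cons]; omega
  | subst x y h ih => simp only [List.length_cons]; omega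

theorem length_le_ed (a b : List α) : b.length ≤ a.length + ed a b :=
  (al_length (al_complete a b)).1
theorem length_le_ed' (a b : List α) : a.length ≤ b.length + ed a b :=
  (al_length (al_complete a b)).2

theorem al_refl (a : List α) : Al a a 0 := by
  induction a with
  | nil => exact Al.nil
  | cons x xs ih =>
      have := Al.subst x x ih
      simpa using this

theorem al_prepend {a b : List α} {k : ℕ} (e : List α) (h : Al a b k) :
    Al a (e ++ b) (e.length + k) := by
  induction e with
  | nil => simpa using h
  | cons y e ih =>
      have := Al.ins y ih
      simp only [List.cons_append, List.length_cons]
      have heq : e.length + k + 1 = e.length + 1 + k := by omega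
      rw [← heq]; exact this

theorem al_append {a b : List α} {k : ℕ} (e : List α) (h : Al a b k) :
    Al a (b ++ e) (k + e.length) := by
  induction h with
  | nil =>
      simp only [List.nil_append, Nat.zero_add]
      induction e with
      | nil => exact Al.nil
      | cons y ys ih =>
          have := Al.ins y ih
          simpa [Nat.add_comm] using this
  | ins y h ih =>
      have h2 := Al.ins y ih
      rw [Nat.add_right_comm] at h2
      simpa using h2
  | del x h ih =>
      have h2 := Al.del x ih
      rw [Nat.add_right_comm] at h2
      exact h2
  | subst x y h ih =>
      have h2 := Al.subst x y ih
      rw [Nat.add_right_comm] at h2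
      simpa using h2

end EdAux

namespace EdAux
variable {α : Type*} [DecidableEq α]

theorem ite_cost_le_one (x y : α) : (if x = y then 0 else 1) ≤ 1 := by split <;> omega

theorem ite_cost_tri (x y z : α) :
    (if x = z then 0 else 1) ≤ (if x = y then 0 else 1) + (if y = z then 0 else 1) := by
  by_cases hxy : x = y <;> by_cases hyz : y = z <;> simp [hxy, hyz] <;> split <;> omega

theorem al_trans_aux : ∀ N : ℕ, ∀ {a b c : List α} {k l : ℕ},
    a.length + b.length + c.length ≤ N → Al a b k → Al b c l →
    ∃ m, m ≤ k + l ∧ Al a c m := by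
  intro N
  induction N using Nat.strong_induction_on with
  | _ N IH =>
    intro a b c k l hN h1 h2
    cases h1 with
    | nil => exact ⟨l, by omega, h2⟩
    | del x h1' =>
      rename_i a' k'
      have hlt : a'.length + b.length + c.length < N := by
        simp only [List.length_cons] at hN; omega
      obtain ⟨m, hm, hal⟩ := IH _ hlt (le_refl _) h1' h2
      exact ⟨m + 1, by omega, Al.del x hal⟩
    | ins y h1' =>
      rename_i b' k'
      cases h2 with
      | ins z h2' =>
        rename_i c' l'
        have hlt : a.length + (y :: b').length + c'.length < N := by
          simp only [List.length_cons] at hN ⊢; omega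
        obtain ⟨m, hm, hal⟩ := IH _ hlt (le_refl _) (Al.ins y h1') h2'
        exact ⟨m + 1, by omega, Al.ins z hal⟩
      | del _ h2' =>
        rename_i l'
        have hlt : a.length + b'.length + c.length < N := by
          simp only [List.length_cons] at hN; omega
        obtain ⟨m, hm, hal⟩ := IH _ hlt (le_refl _) h1' h2'
        exact ⟨m, by omega, hal⟩
      | subst _ z h2' =>
        rename_i c' l'
        have hlt : a.length + b'.length + c'.length < N := by
          simp only [List.length_cons] at hN; omega
        obtain ⟨m, hm, hal⟩ := IH _ hlt (le_refl _) h1' h2'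
        have := ite_cost_le_one y z
        exact ⟨m + 1, by omega, Al.ins z hal⟩
    | subst x y h1' =>
      rename_i a' b' k'
      cases h2 with
      | ins z h2' =>
        rename_i c' l'
        have hlt : (x :: a').length + (y :: b').length + c'.length < N := by
          simp only [List.length_cons] at hN ⊢; omega
        obtain ⟨m, hm, hal⟩ := IH _ hlt (le_refl _) (Al.subst x y h1') h2'
        exact ⟨m + 1, by omega, Al.ins z hal⟩
      | del _ h2' =>
        rename_i l'
        have hlt : a'.length + b'.length + c.length < N := by
          simp only [List.length_cons] at hN; omega
        obtain ⟨m, hm, hal⟩ := IH _ hlt (le_refl _) h1' h2'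
        have := ite_cost_le_one x y
        exact ⟨m + 1, by omega, Al.del x hal⟩
      | subst _ z h2' =>
        rename_i c' l'
        have hlt : a'.length + b'.length + c'.length < N := by
          simp only [List.length_cons] at hN; omega
        obtain ⟨m, hm, hal⟩ := IH _ hlt (le_refl _) h1' h2'
        have := ite_cost_tri x y z
        exact ⟨m + (if x = z then 0 else 1), by omega, Al.subst x z hal⟩

theorem ed_triangle (a b c : List α) : ed a c ≤ ed a b + ed b c := by
  obtain ⟨m, hm, hal⟩ :=
    al_trans_aux (a.length + b.length + c.length) (le_refl _)
      (al_complete a b) (al_complete b c)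
  exact le_trans (al_sound hal) hm

theorem al_split {a bb : List α} {k : ℕ} (h : Al a bb k) :
    ∀ b₁ b₂ : List α, bb = b₁ ++ b₂ →
    ∃ a₁ a₂ k₁ k₂, a = a₁ ++ a₂ ∧ k₁ + k₂ ≤ k ∧ Al a₁ b₁ k₁ ∧ Al a₂ b₂ k₂ := by
  induction h with
  | nil =>
    intro b₁ b₂ he
    obtain ⟨rfl, rfl⟩ : b₁ = [] ∧ b₂ = [] := by
      simpa using he.symm
    exact ⟨[], [], 0, 0, rfl, le_refl _, Al.nil, Al.nil⟩
  | ins y h ih =>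
    intro b₁ b₂ he
    cases b₁ with
    | nil =>
      simp only [List.nil_append] at he
      exact ⟨[], _, 0, _, rfl, by omega, Al.nil, he ▸ Al.ins y h⟩
    | cons z b₁' =>
      simp only [List.cons_append, List.cons.injEq] at he
      obtain ⟨rfl, he⟩ := he
      obtain ⟨a₁, a₂, k₁, k₂, rfl, hk, hal1, hal2⟩ := ih b₁' b₂ he
      exact ⟨a₁, a₂, k₁ + 1, k₂, rfl, by omega, Al.ins y hal1, hal2⟩
  | del x h ih =>
    intro b₁ b₂ he
    obtain ⟨a₁, a₂, k₁, k₂, rfl, hk, hal1, hal2⟩ := ih b₁ b₂ he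
    exact ⟨x :: a₁, a₂, k₁ + 1, k₂, rfl, by omega, Al.del x hal1, hal2⟩
  | subst x y h ih =>
    intro b₁ b₂ he
    cases b₁ with
    | nil =>
      simp only [List.nil_append] at he
      exact ⟨[], _, 0, _, rfl, by omega, Al.nil, he ▸ Al.subst x y h⟩
    | cons z b₁' =>
      simp only [List.cons_append, List.cons.injEq] at he
      obtain ⟨rfl, he⟩ := he
      obtain ⟨a₁, a₂, k₁, k₂, rfl, hk, hal1, hal2⟩ := ih b₁' b₂ he
      have := ite_cost_le_one x y
      exact ⟨x :: a₁, a₂, k₁ + (if x = y then 0 else 1), k₂, rfl, by omega,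
        Al.subst x y hal1, hal2⟩

theorem ed_split₂ (a b₁ b₂ : List α) :
    ∃ a₁ a₂, a = a₁ ++ a₂ ∧ ed a₁ b₁ + ed a₂ b₂ ≤ ed a (b₁ ++ b₂) := by
  obtain ⟨a₁, a₂, k₁, k₂, rfl, hk, hal1, hal2⟩ :=
    al_split (al_complete a (b₁ ++ b₂)) b₁ b₂ rfl
  exact ⟨a₁, a₂, rfl, by have := al_sound hal1; have := al_sound hal2; omega⟩

theorem ed_split₁ (a₁ a₂ b : List α) :
    ∃ b₁ b₂, b = b₁ ++ b₂ ∧ ed a₁ b₁ + ed a₂ b₂ ≤ ed (a₁ ++ a₂) b := by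
  obtain ⟨b₁, b₂, rfl, hk⟩ := ed_split₂ b a₁ a₂
  refine ⟨b₁, b₂, rfl, ?_⟩
  rw [ed_symm a₁ b₁, ed_symm a₂ b₂, ed_symm (a₁ ++ a₂) (b₁ ++ b₂)]
  exact hk

theorem ed_pad (a e₁ e₂ : List α) : ed a (e₁ ++ a ++ e₂) ≤ e₁.length + e₂.length := by
  have h := al_prepend e₁ (al_append e₂ (al_refl a))
  have := al_sound h
  simpa [List.append_assoc] using this

end EdAux

namespace EdAux
variable {α : Type*} [DecidableEq α]

theorem ed_take_le (c : List α) (B : ℕ) : ed c (c.take B) ≤ c.length - B := by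
  rw [ed_symm]
  have h := ed_pad (c.take B) [] (c.drop B)
  simp only [List.nil_append, List.length_nil, Nat.zero_add, List.take_append_drop] at h
  simpa [List.length_drop] using h

theorem window {x P c S a' : List α} {q Lo B : ℕ}
    (hx : x = P ++ c ++ S) (hP : P.length = q) (hB : 0 < B)
    (hLo : Lo ≤ q) (hup : q + c.length ≤ Lo + 6 * B) (hn : Lo + 6 * B ≤ x.length)
    (ha' : a'.length = B) :
    ∃ t, Lo ≤ t ∧ t + B ≤ Lo + 6 * B ∧
      ed a' (sub x B t) ≤ ed a' c + ((B - c.length) + (c.length - B)) := by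
  have hlenx : x.length = q + c.length + S.length := by
    subst hx; simp [← hP]; omega
  have hdropq : x.drop q = c ++ S := by
    subst hx
    rw [List.append_assoc, List.drop_left' hP]
  by_cases hc : B ≤ c.length
  · -- take the first B letters of c
    refine ⟨q, hLo, by omega, ?_⟩
    have hsub : sub x B q = c.take B := by
      rw [sub, hdropq, List.take_append,
        Nat.sub_eq_zero_of_le hc]
      simp
    rw [hsub]
    have h1 := ed_triangle a' c (c.take B)
    have h2 := ed_take_le c B
    omega
  · push_neg at hc
    by_cases hq : q + B ≤ Lo + 6 * B
    · -- extend c to the right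
      refine ⟨q, hLo, hq, ?_⟩
      have hsub : sub x B q = c ++ S.take (B - c.length) := by
        rw [sub, hdropq, List.take_append,
          List.take_of_length_le (le_of_lt hc)]
      rw [hsub]
      have h1 := ed_triangle a' c (c ++ S.take (B - c.length))
      have h2 := ed_pad c [] (S.take (B - c.length))
      simp only [List.nil_append, List.length_nil, Nat.zero_add] at h2
      have h3 : (S.take (B - c.length)).length ≤ B - c.length := by
        simp [List.length_take]
      omega
    · -- window ending at the right edge of the block, containing c
      push_neg at hq
      refine ⟨Lo + 6 * B - B, by omega, by omega, ?_⟩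
      set t := Lo + 6 * B - B with ht
      have htq : t ≤ q := by omega
      have hsub : sub x B t = P.drop t ++ (c ++ S.take (B - (q - t) - c.length)) := by
        rw [sub]
        subst hx
        rw [List.append_assoc, List.drop_append,
          hP, Nat.sub_eq_zero_of_le htq, List.drop_zero,
          List.take_append,
          List.take_of_length_le (l := P.drop t) (by rw [List.length_drop, hP]; omega),
          List.length_drop, hP, List.take_append,
          List.take_of_length_le (l := c) (by omega)]
      rw [hsub]
      have h1 := ed_triangle a' c (P.drop t ++ (c ++ S.take (B - (q - t) - c.length)))
      have h2 := ed_pad c (P.drop t) (S.take (B - (q - t) - c.length))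
      rw [List.append_assoc] at h2
      have h3 : (S.take (B - (q - t) - c.length)).length ≤ B - (q - t) - c.length := by
        simp [List.length_take]
      have h4 : (P.drop t).length = q - t := by rw [List.length_drop, hP]
      omega

end EdAux

namespace EdAux
variable {α : Type*} [DecidableEq α]

theorem sub_spec {x : List α} (P c S : List α) (hx : x = P ++ c ++ S) :
    sub x c.length P.length = c := by
  subst hx
  rw [sub, List.append_assoc, List.drop_left, List.take_left]

theorem extract {xi yk u1 u2 : List α} {E : ℕ} (h : ed xi (u1 ++ yk ++ u2) ≤ E) :
    ∃ a₁ a₃ a₄, xi = a₁ ++ a₃ ++ a₄ ∧ ed a₃ yk ≤ E := by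
  rw [List.append_assoc] at h
  obtain ⟨a₁, a₂, rfl, h1⟩ := ed_split₂ xi u1 (yk ++ u2)
  obtain ⟨a₃, a₄, rfl, h2⟩ := ed_split₂ a₂ yk u2
  exact ⟨a₁, a₃, a₄, by rw [List.append_assoc], by omega⟩

theorem main_half (B n m : ℕ) (hB : 0 < B) (hmB : m ≤ 2 * B)
    (x : List α) (hx : x.length = n)
    (yk : List α) (hyk : yk.length = 3 * B)
    (i j : ℕ) (hij : i ≠ j)
    (hin : 6 * B * (i + 1) ≤ n) (hjn : 6 * B * (j + 1) ≤ n)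
    (hui : ∃ u, yk <:+: u ∧ 8 * ed (sub x (6 * B) (6 * B * i)) u ≤ m)
    (huj : ∃ v, yk <:+: v ∧ 8 * ed (sub x (6 * B) (6 * B * j)) v ≤ m) :
    ∃ s t : ℕ, 6 * B * i ≤ s ∧ s + B ≤ 6 * B * (i + 1) ∧ t + B ≤ n ∧
      (t + B ≤ 6 * B * i ∨ 6 * B * (i + 1) ≤ t) ∧
      2 * ed (sub x B s) (sub x B t) ≤ m := by
  obtain ⟨u, ⟨u1, u2, hu⟩, hEi⟩ := hui
  obtain ⟨v, ⟨v1, v2, hv⟩, hEj⟩ := huj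
  subst hu hv
  set Ei := ed (sub x (6 * B) (6 * B * i)) (u1 ++ yk ++ u2) with hEidef
  set Ej := ed (sub x (6 * B) (6 * B * j)) (v1 ++ yk ++ v2) with hEjdef
  obtain ⟨a₁, a₃, a₄, hxi, ha₃⟩ := extract (le_refl Ei)
  obtain ⟨b₁, b₃, b₄, hxj, hb₃⟩ := extract (le_refl Ej)
  -- lengths of the blocks
  have hii : 6 * B * i + 6 * B ≤ n := by
    have : 6 * B * (i + 1) = 6 * B * i + 6 * B := by ring
    omega
  have hjj : 6 * B * j + 6 * B ≤ n := by
    have : 6 * B * (j + 1) = 6 * B * j + 6 * B := by ring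
    omega
  have hxi_len : (sub x (6 * B) (6 * B * i)).length = 6 * B := by
    rw [sub, List.length_take, List.length_drop, hx]; omega
  have hxj_len : (sub x (6 * B) (6 * B * j)).length = 6 * B := by
    rw [sub, List.length_take, List.length_drop, hx]; omega
  -- a₃ is long
  have ha₃len : 2 * B ≤ a₃.length := by
    have h1 := length_le_ed a₃ yk
    omega
  -- decomposition of x around block i
  have hxdec_i : x = x.take (6 * B * i) ++ sub x (6 * B) (6 * B * i)
      ++ x.drop (6 * B * i + 6 * B) := by
    rw [sub, List.append_assoc, List.drop_take_append_drop, List.take_append_drop]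
  have hxdec_j : x = x.take (6 * B * j) ++ sub x (6 * B) (6 * B * j)
      ++ x.drop (6 * B * j + 6 * B) := by
    rw [sub, List.append_assoc, List.drop_take_append_drop, List.take_append_drop]
  -- the candidate left substring
  set a' := a₃.take B with ha'def
  have ha' : a'.length = B := by
    rw [ha'def, List.length_take]; omega
  -- split b₃ along a' ++ a₃.drop B
  have htd : a' ++ a₃.drop B = a₃ := List.take_append_drop B a₃
  obtain ⟨c, c₂, hb₃split, hcost⟩ := ed_split₁ a' (a₃.drop B) b₃
  rw [htd] at hcost
  have hac : ed a' c ≤ Ei + Ej := by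
    have htri := ed_triangle a₃ yk b₃
    have hsym : ed yk b₃ = ed b₃ yk := ed_symm yk b₃
    omega
  -- position of a'
  set s := 6 * B * i + a₁.length with hsdef
  have hsub_s : sub x B s = a' := by
    have hdecomp : x = (x.take (6 * B * i) ++ a₁) ++ a'
        ++ ((a₃.drop B ++ a₄) ++ x.drop (6 * B * i + 6 * B)) := by
      conv_lhs => rw [hxdec_i, hxi, ← htd]
      simp [List.append_assoc]
    have hPlen : (x.take (6 * B * i) ++ a₁).length = s := by
      rw [List.length_append, List.length_take, hx, hsdef]
      omega
    have := sub_spec _ _ _ hdecomp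
    rwa [hPlen, ha'] at this
  -- window around c inside block j
  have hxi_sum : a₁.length + a₃.length + a₄.length = 6 * B := by
    have := congrArg List.length hxi
    simp [List.length_append] at this
    omega
  have hxj_sum : b₁.length + b₃.length + b₄.length = 6 * B := by
    have := congrArg List.length hxj
    simp [List.length_append] at this
    omega
  have hdecomp_c : x = (x.take (6 * B * j) ++ b₁) ++ c
      ++ ((c₂ ++ b₄) ++ x.drop (6 * B * j + 6 * B)) := by
    conv_lhs => rw [hxdec_j]
    rw [hxj, hb₃split]
    simp [List.append_assoc]
  have hclen : c.length + c₂.length = b₃.length := by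
    have := congrArg List.length hb₃split
    simp [List.length_append] at this
    omega
  obtain ⟨t, ht1, ht2, ht3⟩ := window (q := 6 * B * j + b₁.length) (Lo := 6 * B * j)
    hdecomp_c
    (by rw [List.length_append, List.length_take, hx]; omega) hB
    (by omega) (by omega) (by rw [hx]; omega) ha'
  refine ⟨s, t, by omega, ?_, ?_, ?_, ?_⟩
  · have : 6 * B * (i + 1) = 6 * B * i + 6 * B := by ring
    omega
  · omega
  · rcases Nat.lt_or_ge j i with h | h
    · left
      have : 6 * B * (j + 1) ≤ 6 * B * i := Nat.mul_le_mul_left _ (by omega)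
      have h2 : 6 * B * (j + 1) = 6 * B * j + 6 * B := by ring
      omega
    · right
      have hlt : i < j := by omega
      have : 6 * B * (i + 1) ≤ 6 * B * j := Nat.mul_le_mul_left _ (by omega)
      omega
  · rw [hsub_s]
    have hlen1 := length_le_ed a' c
    have hlen2 := length_le_ed' a' c
    rw [ha'] at hlen1 hlen2
    omega

end EdAux


/-- **Lemma 3.4.**  Let `x, y ∈ Σⁿ` with `6B ∣ n`; break `x` into blocks of length `6B`
and `y` into blocks of length `3B`.  If two distinct blocks `x^i` and `x^j` both
partially edit match with the same block `y^k` — i.e. each is within `pB/8` edits of a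
`6B`-letter substring of `y` containing `y^k` — then neither `x^i` nor `x^j` is
`p`-unique: each contains a `B`-letter substring within `pB/2` edits of some `B`-letter
substring of `x` disjoint from that block. -/
theorem both_match_not_unique {α : Type*} [DecidableEq α]
    (p : ℝ) (B n : ℕ) (hp0 : 0 < p) (hp1 : p < 1) (hB : 0 < B)
    (hpB : ∃ m : ℕ, (m : ℝ) = p * B)
    (x y : List α) (hx : x.length = n) (hy : y.length = n) (hn : 6 * B ∣ n)
    (i j k : ℕ) (hij : i ≠ j)
    (hi : i < n / (6 * B)) (hj : j < n / (6 * B)) (hk : k < n / (3 * B))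
    (hui : ∃ u : List α, u <:+: y ∧ u.length = 6 * B ∧
      sub y (3 * B) (3 * B * k) <:+: u ∧
      (ed (sub x (6 * B) (6 * B * i)) u : ℝ) ≤ p * B / 8)
    (huj : ∃ v : List α, v <:+: y ∧ v.length = 6 * B ∧
      sub y (3 * B) (3 * B * k) <:+: v ∧
      (ed (sub x (6 * B) (6 * B * j)) v : ℝ) ≤ p * B / 8) :
    (∃ s t : ℕ, 6 * B * i ≤ s ∧ s + B ≤ 6 * B * (i + 1) ∧ t + B ≤ n ∧
      (t + B ≤ 6 * B * i ∨ 6 * B * (i + 1) ≤ t) ∧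
      (ed (sub x B s) (sub x B t) : ℝ) ≤ p * B / 2) ∧
    (∃ s t : ℕ, 6 * B * j ≤ s ∧ s + B ≤ 6 * B * (j + 1) ∧ t + B ≤ n ∧
      (t + B ≤ 6 * B * j ∨ 6 * B * (j + 1) ≤ t) ∧
      (ed (sub x B s) (sub x B t) : ℝ) ≤ p * B / 2) := by
  obtain ⟨m, hm⟩ := hpB
  -- `m ≤ 2 * B`
  have hmB : m ≤ 2 * B := by
    have h1 : (m : ℝ) ≤ 2 * B := by
      rw [hm]
      have : p * B ≤ 1 * B := by
        apply mul_le_mul_of_nonneg_right (le_of_lt hp1) (by positivity)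
      nlinarith
    exact_mod_cast h1
  -- block bounds
  have h6B : 0 < 6 * B := by omega
  obtain ⟨q, hq⟩ := hn
  have hndiv : n / (6 * B) = q := by rw [hq, Nat.mul_div_cancel_left _ h6B]
  have hin : 6 * B * (i + 1) ≤ n := by
    rw [hndiv] at hi
    rw [hq]
    exact Nat.mul_le_mul_left _ (by omega)
  have hjn : 6 * B * (j + 1) ≤ n := by
    rw [hndiv] at hj
    rw [hq]
    exact Nat.mul_le_mul_left _ (by omega)
  have hkn : 3 * B * (k + 1) ≤ n := by
    have h3B : 0 < 3 * B := by omega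
    have : n / (3 * B) * (3 * B) ≤ n := Nat.div_mul_le_self n (3 * B)
    have hk' : (k + 1) * (3 * B) ≤ n / (3 * B) * (3 * B) :=
      Nat.mul_le_mul_right _ (by omega)
    calc 3 * B * (k + 1) = (k + 1) * (3 * B) := by ring
      _ ≤ n / (3 * B) * (3 * B) := hk'
      _ ≤ n := this
  -- length of the y-block
  have hyk : (sub y (3 * B) (3 * B * k)).length = 3 * B := by
    rw [sub, List.length_take, List.length_drop, hy]
    have : 3 * B * (k + 1) = 3 * B * k + 3 * B := by ring
    omega
  -- convert the real hypotheses to natural-number hypotheses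
  have conv8 : ∀ (w u : List α), (ed w u : ℝ) ≤ p * B / 8 → 8 * ed w u ≤ m := by
    intro w u h
    have : ((8 * ed w u : ℕ) : ℝ) ≤ (m : ℝ) := by push_cast; rw [hm]; linarith
    exact_mod_cast this
  obtain ⟨u, -, -, hyku, hedu⟩ := hui
  obtain ⟨v, -, -, hykv, hedv⟩ := huj
  have hui' : ∃ u, sub y (3 * B) (3 * B * k) <:+: u ∧
      8 * ed (sub x (6 * B) (6 * B * i)) u ≤ m := ⟨u, hyku, conv8 _ _ hedu⟩
  have huj' : ∃ v, sub y (3 * B) (3 * B * k) <:+: v ∧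
      8 * ed (sub x (6 * B) (6 * B * j)) v ≤ m := ⟨v, hykv, conv8 _ _ hedv⟩
  have conv2 : ∀ (w u : List α), 2 * ed w u ≤ m → (ed w u : ℝ) ≤ p * B / 2 := by
    intro w u h
    have : ((2 * ed w u : ℕ) : ℝ) ≤ (m : ℝ) := by exact_mod_cast h
    push_cast at this
    rw [hm] at this
    linarith
  constructor
  · obtain ⟨s, t, h1, h2, h3, h4, h5⟩ := EdAux.main_half B n m hB hmB x hx _ hyk i j hij
      hin hjn hui' huj'
    exact ⟨s, t, h1, h2, h3, h4, conv2 _ _ h5⟩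
  · obtain ⟨s, t, h1, h2, h3, h4, h5⟩ := EdAux.main_half B n m hB hmB x hx _ hyk j i
      (Ne.symm hij) hjn hin huj' hui'
    exact ⟨s, t, h1, h2, h3, h4, conv2 _ _ h5⟩
end
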